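/- Let C be a monoidal category, A a separable monoid object in C, and f : M ⟶ N a morphism of left A-module objects. If the underlying morphism of f in C admits a retraction in C, then f admits a retraction in the category of A-module objects; similarly, if the underlying morphism of f admits a section in C, then f admits a section in the category of A-module objects. -/

import Mathlib

open CategoryTheory MonoidalCategory

/-- A monoid object `A` in a monoidal category is *separable* if its multiplication
`μ : A ⊗ A ⟶ A` admits a section `σ : A ⟶ A ⊗ A` which is a morphism of
`A`-bimodule objects from `A` to the free bimodule `A ⊗ A`. -/
def Mon_.IsSeparable {C : Type*} [Category C] [MonoidalCategory C] (A : Mon C) : Prop :=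
  ∃ σ : A.X ⟶ A.X ⊗ A.X,
    σ ≫ MonObj.mul (X := A.X) = 𝟙 A.X ∧
    MonObj.mul (X := A.X) ≫ σ = (A.X ◁ σ) ≫ (α_ A.X A.X A.X).inv ≫ (MonObj.mul (X := A.X) ▷ A.X) ∧
    MonObj.mul (X := A.X) ≫ σ = (σ ▷ A.X) ≫ (α_ A.X A.X A.X).hom ≫ (A.X ◁ MonObj.mul (X := A.X))


section Aux

variable {C : Type*} [Category C] [MonoidalCategory C] {A : Mon C}

open scoped MonObj

def CategoryTheory.Mod.act (N : Mod C A.X) : A.X ⊗ N.X ⟶ N.X := ModObj.smul (M := A.X) (X := N.X)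

lemma CategoryTheory.Mod.act_assoc_flip (N : Mod C A.X) :
    (A.X ◁ N.act) ≫ N.act = (α_ A.X A.X N.X).inv ≫ (μ[A.X] ▷ N.X) ≫ N.act :=
  ModObj.mul_smul_self_flip (M := A.X) N.X

lemma CategoryTheory.Mod.one_act (N : Mod C A.X) : (η[A.X] ▷ N.X) ≫ N.act = (λ_ N.X).hom :=
  ModObj.one_smul_self A.X N.X

lemma CategoryTheory.Mod.Hom.act_hom {M N : Mod C A.X} (f : M ⟶ N) :
    M.act ≫ f.hom = (A.X ◁ f.hom) ≫ N.act :=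
  IsModHom.smul_hom

lemma CategoryTheory.Mod.Hom.act_hom_assoc {M N : Mod C A.X} (f : M ⟶ N) {Z : C} (h : N.X ⟶ Z) :
    M.act ≫ f.hom ≫ h = (A.X ◁ f.hom) ≫ N.act ≫ h := by
  rw [← Category.assoc, Mod.Hom.act_hom, Category.assoc]

lemma sep_star_left (σ : A.X ⟶ A.X ⊗ A.X)
    (h3 : μ[A.X] ≫ σ = (σ ▷ A.X) ≫ (α_ A.X A.X A.X).hom ≫ (A.X ◁ μ[A.X]))
    {M N : Mod C A.X} (k : N.X ⟶ M.X) :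
    N.act ≫ (λ_ N.X).inv ≫ ((η[A.X] ≫ σ) ▷ N.X) ≫ (α_ A.X A.X N.X).hom ≫
      (A.X ◁ (N.act ≫ k)) ≫ M.act
    = (σ ▷ N.X) ≫ (α_ A.X A.X N.X).hom ≫ (A.X ◁ (N.act ≫ k)) ≫ M.act := by
  have hl0 : (λ_ A.X).hom ≫ σ = ((η[A.X] ≫ σ) ▷ A.X) ≫ (α_ A.X A.X A.X).hom ≫
      (A.X ◁ μ[A.X]) := by
    rw [← MonObj.one_mul_assoc A.X, h3, ← comp_whiskerRight_assoc]
  have hl : σ = (λ_ A.X).inv ≫ ((η[A.X] ≫ σ) ▷ A.X) ≫ (α_ A.X A.X A.X).hom ≫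
      (A.X ◁ μ[A.X]) := by
    rw [← hl0, Iso.inv_hom_id_assoc]
  calc
    N.act ≫ (λ_ N.X).inv ≫ ((η[A.X] ≫ σ) ▷ N.X) ≫ (α_ A.X A.X N.X).hom ≫
        (A.X ◁ (N.act ≫ k)) ≫ M.act
      = (λ_ (A.X ⊗ N.X)).inv ≫ (𝟙_ C ◁ N.act) ≫ ((η[A.X] ≫ σ) ▷ N.X) ≫
        (α_ A.X A.X N.X).hom ≫ (A.X ◁ (N.act ≫ k)) ≫ M.act := by
        rw [leftUnitor_inv_naturality_assoc]
    _ = (λ_ (A.X ⊗ N.X)).inv ≫ ((η[A.X] ≫ σ) ▷ (A.X ⊗ N.X)) ≫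
        ((A.X ⊗ A.X) ◁ N.act) ≫ (α_ A.X A.X N.X).hom ≫ (A.X ◁ (N.act ≫ k)) ≫ M.act := by
        rw [whisker_exchange_assoc]
    _ = (λ_ (A.X ⊗ N.X)).inv ≫ ((η[A.X] ≫ σ) ▷ (A.X ⊗ N.X)) ≫
        (α_ A.X A.X (A.X ⊗ N.X)).hom ≫ (A.X ◁ (A.X ◁ N.act)) ≫
        (A.X ◁ (N.act ≫ k)) ≫ M.act := by
        rw [associator_naturality_right_assoc]
    _ = (λ_ (A.X ⊗ N.X)).inv ≫ ((η[A.X] ≫ σ) ▷ (A.X ⊗ N.X)) ≫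
        (α_ A.X A.X (A.X ⊗ N.X)).hom ≫ (A.X ◁ (α_ A.X A.X N.X).inv) ≫
        (A.X ◁ (μ[A.X] ▷ N.X)) ≫ (A.X ◁ (N.act ≫ k)) ≫ M.act := by
        rw [← MonoidalCategory.whiskerLeft_comp_assoc,
          ← Category.assoc (A.X ◁ N.act) N.act k, N.act_assoc_flip]
        simp only [Category.assoc, MonoidalCategory.whiskerLeft_comp,
          MonoidalCategory.whiskerLeft_comp_assoc]
    _ = (((λ_ A.X).inv ≫ ((η[A.X] ≫ σ) ▷ A.X) ≫ (α_ A.X A.X A.X).hom ≫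
        (A.X ◁ μ[A.X])) ▷ N.X) ≫ (α_ A.X A.X N.X).hom ≫ (A.X ◁ (N.act ≫ k)) ≫ M.act := by
        monoidal
    _ = (σ ▷ N.X) ≫ (α_ A.X A.X N.X).hom ≫ (A.X ◁ (N.act ≫ k)) ≫ M.act := by
        rw [← hl]

lemma sep_star_right (σ : A.X ⟶ A.X ⊗ A.X)
    (h2 : μ[A.X] ≫ σ = (A.X ◁ σ) ≫ (α_ A.X A.X A.X).inv ≫ (μ[A.X] ▷ A.X))
    {M N : Mod C A.X} (k : N.X ⟶ M.X) :
    (A.X ◁ ((λ_ N.X).inv ≫ ((η[A.X] ≫ σ) ▷ N.X) ≫ (α_ A.X A.X N.X).hom ≫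
      (A.X ◁ (N.act ≫ k)) ≫ M.act)) ≫ M.act
    = (σ ▷ N.X) ≫ (α_ A.X A.X N.X).hom ≫ (A.X ◁ (N.act ≫ k)) ≫ M.act := by
  have hr0 : (ρ_ A.X).hom ≫ σ = (A.X ◁ (η[A.X] ≫ σ)) ≫ (α_ A.X A.X A.X).inv ≫
      (μ[A.X] ▷ A.X) := by
    rw [← MonObj.mul_one_assoc A.X, h2, ← MonoidalCategory.whiskerLeft_comp_assoc]
  have hr : σ = (ρ_ A.X).inv ≫ (A.X ◁ (η[A.X] ≫ σ)) ≫ (α_ A.X A.X A.X).inv ≫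
      (μ[A.X] ▷ A.X) := by
    rw [← hr0, Iso.inv_hom_id_assoc]
  calc
    (A.X ◁ ((λ_ N.X).inv ≫ ((η[A.X] ≫ σ) ▷ N.X) ≫ (α_ A.X A.X N.X).hom ≫
        (A.X ◁ (N.act ≫ k)) ≫ M.act)) ≫ M.act
      = (A.X ◁ (λ_ N.X).inv) ≫ (A.X ◁ ((η[A.X] ≫ σ) ▷ N.X)) ≫
        (A.X ◁ (α_ A.X A.X N.X).hom) ≫ (A.X ◁ (A.X ◁ (N.act ≫ k))) ≫
        (α_ A.X A.X M.X).inv ≫ (μ[A.X] ▷ M.X) ≫ M.act := by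
        simp only [MonoidalCategory.whiskerLeft_comp, Category.assoc]
        rw [M.act_assoc_flip]
    _ = (A.X ◁ (λ_ N.X).inv) ≫ (A.X ◁ ((η[A.X] ≫ σ) ▷ N.X)) ≫
        (A.X ◁ (α_ A.X A.X N.X).hom) ≫ (α_ A.X A.X (A.X ⊗ N.X)).inv ≫
        ((A.X ⊗ A.X) ◁ (N.act ≫ k)) ≫ (μ[A.X] ▷ M.X) ≫ M.act := by
        rw [associator_inv_naturality_right_assoc]
    _ = (A.X ◁ (λ_ N.X).inv) ≫ (A.X ◁ ((η[A.X] ≫ σ) ▷ N.X)) ≫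
        (A.X ◁ (α_ A.X A.X N.X).hom) ≫ (α_ A.X A.X (A.X ⊗ N.X)).inv ≫
        (μ[A.X] ▷ (A.X ⊗ N.X)) ≫ (A.X ◁ (N.act ≫ k)) ≫ M.act := by
        rw [whisker_exchange_assoc]
    _ = (((ρ_ A.X).inv ≫ (A.X ◁ (η[A.X] ≫ σ)) ≫ (α_ A.X A.X A.X).inv ≫
        (μ[A.X] ▷ A.X)) ▷ N.X) ≫ (α_ A.X A.X N.X).hom ≫ (A.X ◁ (N.act ≫ k)) ≫ M.act := by
        monoidal
    _ = (σ ▷ N.X) ≫ (α_ A.X A.X N.X).hom ≫ (A.X ◁ (N.act ≫ k)) ≫ M.act := by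
        rw [← hr]

lemma sep_unit (σ : A.X ⟶ A.X ⊗ A.X) (h1 : σ ≫ μ[A.X] = 𝟙 A.X) (M : Mod C A.X) :
    (λ_ M.X).inv ≫ ((η[A.X] ≫ σ) ▷ M.X) ≫ (α_ A.X A.X M.X).hom ≫
      (A.X ◁ M.act) ≫ M.act = 𝟙 M.X := by
  rw [M.act_assoc_flip]
  simp only [Category.assoc, Iso.hom_inv_id_assoc]
  rw [← comp_whiskerRight_assoc, Category.assoc, h1, Category.comp_id, M.one_act]
  simp

end Aux

open scoped MonObj

/-- Over a separable monoid object, a morphism of module objects whose underlying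
morphism admits a retraction (resp. a section) in `C` admits a retraction (resp. a
section) in the category of module objects. -/
theorem Mod_.section_retraction_of_underlying {C : Type*} [Category C] [MonoidalCategory C]
    {A : Mon C} (hA : Mon_.IsSeparable A) {M N : Mod C A.X} (f : M ⟶ N) :
    ((∃ r : N.X ⟶ M.X, f.hom ≫ r = 𝟙 M.X) → ∃ R : N ⟶ M, f ≫ R = 𝟙 M) ∧
    ((∃ s : N.X ⟶ M.X, s ≫ f.hom = 𝟙 N.X) → ∃ S : N ⟶ M, S ≫ f = 𝟙 N) := by
  obtain ⟨σ, h1, h2, h3⟩ := hA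
  constructor
  · rintro ⟨r, hr⟩
    refine ⟨Mod.Hom.mk' ((λ_ N.X).inv ≫ ((η[A.X] ≫ σ) ▷ N.X) ≫ (α_ A.X A.X N.X).hom ≫
      (A.X ◁ (N.act ≫ r)) ≫ M.act)
      ((sep_star_left σ h3 r).trans (sep_star_right σ h2 r).symm), ?_⟩
    ext
    show f.hom ≫ (λ_ N.X).inv ≫ ((η[A.X] ≫ σ) ▷ N.X) ≫ (α_ A.X A.X N.X).hom ≫
      (A.X ◁ (N.act ≫ r)) ≫ M.act = 𝟙 M.X
    rw [leftUnitor_inv_naturality_assoc, whisker_exchange_assoc,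
      associator_naturality_right_assoc, ← MonoidalCategory.whiskerLeft_comp_assoc,
      ← f.act_hom_assoc, hr, Category.comp_id]
    exact sep_unit σ h1 M
  · rintro ⟨s, hs⟩
    refine ⟨Mod.Hom.mk' ((λ_ N.X).inv ≫ ((η[A.X] ≫ σ) ▷ N.X) ≫ (α_ A.X A.X N.X).hom ≫
      (A.X ◁ (N.act ≫ s)) ≫ M.act)
      ((sep_star_left σ h3 s).trans (sep_star_right σ h2 s).symm), ?_⟩
    ext
    show ((λ_ N.X).inv ≫ ((η[A.X] ≫ σ) ▷ N.X) ≫ (α_ A.X A.X N.X).hom ≫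
      (A.X ◁ (N.act ≫ s)) ≫ M.act) ≫ f.hom = 𝟙 N.X
    simp only [Category.assoc]
    rw [f.act_hom, ← MonoidalCategory.whiskerLeft_comp_assoc]
    simp only [Category.assoc, hs, Category.comp_id]
    exact sep_unit σ h1 N
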